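/- arXiv:2004.14835 — 3 statements merged into one kernel-verified Lean document; each statement's English description precedes it below -/
import Mathlib

section
/- Preservation of PrIC3 invariants under obligation resolution: let (i, s, δ) with i > 0 be such that Φ(F_{i-1})[s] ≤ δ and let frames F_0, …, F_i satisfy the PrIC3 invariants. Then the updated frames F_0[s ↦ min(F_0[s], δ)], …, F_i[s ↦ min(F_i[s], δ)] also satisfy the PrIC3 invariants. -/
open scoped ENNReal BigOperators Classical
set_option linter.unusedSectionVars false

variable {S Act : Type*} [Fintype S] [Fintype Act]

/-- A frame maps every state into the unit interval `[0,1]` (embedded in `ℝ≥0∞`). -/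
def IsFrame {S : Type*} (F : S → ℝ≥0∞) : Prop := ∀ s, F s ≤ 1

/-- The actions enabled at a state: those with positive outgoing probability mass. -/
def enabled {S Act : Type*} (P : S → Act → S → ℝ≥0∞) (s : S) : Set Act :=
  {a | ∃ s', 0 < P s a s'}

/-- The Bellman operator of a (sub)stochastic transition function `P` with bad states `B`. -/
noncomputable def bellman (P : S → Act → S → ℝ≥0∞) (B : Set S) (F : S → ℝ≥0∞) : S → ℝ≥0∞ :=
  fun s => if s ∈ B then 1 else ⨆ a ∈ enabled P s, ∑ s', P s a s' * F s'

theorem bellman_mono (P : S → Act → S → ℝ≥0∞) (B : Set S) : Monotone (bellman P B) := by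
  intro F G h s
  unfold bellman
  split
  · exact le_rfl
  · exact iSup_mono fun a => iSup_mono fun _ =>
      Finset.sum_le_sum fun s' _ => mul_le_mul_right (h s') _

/-- The Bellman operator as a monotone map on the complete lattice of frames. -/
noncomputable def bellmanHom (P : S → Act → S → ℝ≥0∞) (B : Set S) :
    (S → ℝ≥0∞) →o (S → ℝ≥0∞) := ⟨bellman P B, bellman_mono P B⟩

/-- The maximal reachability probability `Pr^max(s → ◊B)`,
as the least fixed point of the Bellman operator. -/
noncomputable def prMax (P : S → Act → S → ℝ≥0∞) (B : Set S) : S → ℝ≥0∞ :=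
  OrderHom.lfp (bellmanHom P B)

/-- A finite Markov decision process. -/
structure MDP (S Act : Type*) [Fintype S] [Fintype Act] where
  init : S
  P : S → Act → S → ℝ≥0∞
  stoch : ∀ s a, a ∈ enabled P s → ∑ s', P s a s' = 1
  exists_enabled : ∀ s, (enabled P s).Nonempty

/-- The PrIC3 invariants for frames `F 0, …, F k`: initiality, chain property,
frame safety, and relative inductivity. -/
def PrIC3Inv (M : MDP S Act) (B : Set S) (lam : ℝ≥0∞) (F : ℕ → S → ℝ≥0∞) (k : ℕ) : Prop :=
  (F 0 = bellman M.P B (fun _ => 0)) ∧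
  (∀ i < k, F i ≤ F (i+1)) ∧
  (∀ i ≤ k, F i M.init ≤ lam) ∧
  (∀ i < k, bellman M.P B (F i) ≤ F (i+1))

/-- resolving an obligation `(i, s, δ)` with `Φ(F (i-1))[s] ≤ δ`
by lowering the value of `s` in all frames `F 0, …, F i` to at most `δ`
preserves the PrIC3 invariants. -/
theorem pric3_inv_preserved_update [DecidableEq S] (M : MDP S Act) (B : Set S)
    (lam : ℝ≥0∞) (F : ℕ → S → ℝ≥0∞) (i : ℕ) (hi : 0 < i) (s : S) (δ : ℝ≥0∞)
    (hδ : bellman M.P B (F (i-1)) s ≤ δ)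
    (hinv : PrIC3Inv M B lam F i) :
    PrIC3Inv M B lam (fun j => Function.update (F j) s (min (F j s) δ)) i := by
  obtain ⟨h0, hchain, hsafe, hind⟩ := hinv
  have hF0δ : F 0 s ≤ δ := by
    have h1 : F 0 s ≤ bellman M.P B (F (i-1)) s := by
      rw [h0]; exact bellman_mono M.P B (fun t => zero_le) s
    exact h1.trans hδ
  have hchain_le : ∀ m ≤ i, ∀ j ≤ m, F j ≤ F m := by
    intro m hm
    induction m with
    | zero => intro j hj; rw [Nat.le_zero.mp hj]
    | succ n ih =>
      intro j hj
      rcases Nat.eq_or_lt_of_le hj with rfl | hlt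
      · exact le_rfl
      · exact (ih (Nat.le_of_succ_le hm) j (Nat.lt_succ_iff.mp hlt)).trans
          (hchain n (Nat.lt_of_succ_le hm))
  refine ⟨?_, ?_, ?_, ?_⟩
  · funext t
    by_cases ht : t = s
    · subst ht
      simp only [Function.update_self, min_eq_left hF0δ, ← h0]
    · simp only [Function.update_of_ne ht, h0]
  · intro j hj t
    by_cases ht : t = s
    · subst ht
      simp only [Function.update_self]
      exact min_le_min_right δ (hchain j hj t)
    · simp only [Function.update_of_ne ht]
      exact hchain j hj t
  · intro j hj
    by_cases ht : M.init = s
    · rw [ht]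
      simp only [Function.update_self]
      refine (min_le_left _ _).trans ?_
      rw [← ht]; exact hsafe j hj
    · simp only [Function.update_of_ne ht]
      exact hsafe j hj
  · intro j hj t
    have hGleF : Function.update (F j) s (min (F j s) δ) ≤ F j := by
      intro u
      by_cases hu : u = s
      · subst hu; simp only [Function.update_self]; exact min_le_left _ _
      · simp only [Function.update_of_ne hu]; exact le_rfl
    have h1 : bellman M.P B (Function.update (F j) s (min (F j s) δ)) t ≤
        bellman M.P B (F j) t := bellman_mono M.P B hGleF t
    by_cases ht : t = s
    · subst ht
      simp only [Function.update_self]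
      refine le_min (h1.trans (hind j hj t)) ?_
      have h2 : Function.update (F j) t (min (F j t) δ) ≤ F (i-1) :=
        hGleF.trans (hchain_le (i-1) (Nat.sub_le i 1) j (Nat.le_pred_of_lt hj))
      exact (bellman_mono M.P B h2 t).trans hδ
    · simp only [Function.update_of_ne ht]
      exact h1.trans (hind j hj t)
end

section
/- No PrIC3 frame sequence of length exceeding a witnessing bound exists for unsafe MDPs: if Φ^{n+1}(0)[s_I] > λ for some n, then there is no sequence of frames F_0, …, F_n satisfying all PrIC3 invariants (initiality, chain property, frame safety, relative inductivity) of length n+1. -/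
open scoped ENNReal BigOperators Classical
set_option linter.unusedSectionVars false

variable {S Act : Type*} [Fintype S] [Fintype Act]

/-- if `Φ^{n+1}(0)[s_I] > λ`, then no sequence of frames `F 0, …, F n`
satisfies all PrIC3 invariants. -/
theorem no_pric3_frames_of_unsafe (M : MDP S Act) (B : Set S) (lam : ℝ≥0∞) (n : ℕ)
    (h : lam < (bellman M.P B)^[n+1] (fun _ => 0) M.init) :
    ∀ F : ℕ → S → ℝ≥0∞, ¬ PrIC3Inv M B lam F n := by
  intro F hF
  obtain ⟨h0, _, hsafe, hind⟩ := hF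
  have key : ∀ i ≤ n, (bellman M.P B)^[i+1] (fun _ => 0) ≤ F i := by
    intro i hi
    induction i with
    | zero => simp [h0]
    | succ j ih =>
      have hj : j ≤ n := Nat.le_of_succ_le hi
      calc (bellman M.P B)^[j+2] (fun _ => 0)
          = bellman M.P B ((bellman M.P B)^[j+1] (fun _ => 0)) := by
            rw [Function.iterate_succ_apply']
        _ ≤ bellman M.P B (F j) := bellman_mono M.P B (ih hj)
        _ ≤ F (j+1) := hind j (Nat.lt_of_succ_le hi)
  exact absurd (le_trans (key n le_rfl M.init) (hsafe n le_rfl)) (not_le.mpr h)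
end

section
/- Propagation preserves relative inductivity: given frames F_0, …, F_{k+1} satisfying the PrIC3 invariants except possibly frame safety at F_{k+1}, and given i < k+1 and a state s such that replacing F_{i+1}[s] by F_i[s] preserves Φ(F_i) ≤ F_{i+1}' and Φ(F_{i+1}') ≤ F_{i+2} (when i+2 ≤ k+1), the updated sequence still satisfies initiality, the chain property, and relative inductivity. -/
open scoped ENNReal BigOperators Classical
set_option linter.unusedSectionVars false

variable {S Act : Type*} [Fintype S] [Fintype Act]

/-- propagation preserves initiality, the chain property and relative
inductivity: lowering `F (i+1)` at `s` to `F i s` is harmless provided relative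
inductivity is preserved around index `i+1`. -/
theorem propagate_preserves [DecidableEq S] (M : MDP S Act) (B : Set S) (lam : ℝ≥0∞)
    (k : ℕ) (F : ℕ → S → ℝ≥0∞)
    (h0 : F 0 = bellman M.P B (fun _ => 0))
    (hchain : ∀ j < k+1, F j ≤ F (j+1))
    (hsafe : ∀ j ≤ k, F j M.init ≤ lam)
    (hind : ∀ j < k+1, bellman M.P B (F j) ≤ F (j+1))
    (i : ℕ) (hi : i < k+1) (s : S)
    (G : ℕ → S → ℝ≥0∞)
    (hG : G = fun j => if j = i+1 then Function.update (F (i+1)) s (F i s) else F j)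
    (h1 : bellman M.P B (F i) ≤ G (i+1))
    (h2 : i + 2 ≤ k + 1 → bellman M.P B (G (i+1)) ≤ F (i+2)) :
    (G 0 = bellman M.P B (fun _ => 0)) ∧
    (∀ j < k+1, G j ≤ G (j+1)) ∧
    (∀ j < k+1, bellman M.P B (G j) ≤ G (j+1)) := by
  subst hG
  have hupd_le : Function.update (F (i+1)) s (F i s) ≤ F (i+1) := by
    intro t
    by_cases ht : t = s
    · subst ht; simp [Function.update]; exact hchain i hi t
    · simp [Function.update, ht]
  have hle_upd : F i ≤ Function.update (F (i+1)) s (F i s) := by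
    intro t
    by_cases ht : t = s
    · subst ht; simp [Function.update]
    · simp [Function.update, ht]; exact hchain i hi t
  refine ⟨by simp [h0], ?_, ?_⟩
  · intro j hj
    by_cases hji : j = i
    · subst hji; simpa using hle_upd
    · by_cases hji1 : j = i + 1
      · subst hji1
        simp only [if_pos rfl]
        have : (i+1+1 = i+1) = False := by simp
        simp only [this, if_false]
        exact le_trans hupd_le (hchain (i+1) hj)
      · have hj1 : j + 1 ≠ i + 1 := fun h => hji (Nat.succ_injective h)
        simp only [if_neg hji1, if_neg hj1]
        exact hchain j hj
  · intro j hj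
    by_cases hji : j = i
    · subst hji
      have : (j = j+1) = False := by simp
      simp only [this, if_false]
      simpa using h1
    · by_cases hji1 : j = i + 1
      · subst hji1
        have h2' := h2 hj
        simp only [if_pos rfl] at h2' ⊢
        have : (i+1+1 = i+1) = False := by simp
        simp only [this, if_false]
        exact h2'
      · have hj1 : j + 1 ≠ i + 1 := fun h => hji (Nat.succ_injective h)
        simp only [if_neg hji1, if_neg hj1]
        exact hind j hj
end
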